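/- If {v1, v2}, {v2, v3}, and {v1, v4} are all double-vertex dominators of u, and {v1, v2} dominates v3, then {v1, v4} dominates v3. -/

import Mathlib

/-- A nonempty directed path `p` from `a` to `b` in the graph with edge relation `E`. -/
def IsPath {V : Type*} (E : V → V → Prop) (p : List V) (a b : V) : Prop :=
  p ≠ [] ∧ p.head? = some a ∧ p.getLast? = some b ∧ p.Chain' E

/-- `A` dominates `B` with respect to `root`: every path from a vertex of `B` to `root`
contains a vertex of `A`. -/
def Dominates {V : Type*} (E : V → V → Prop) (root : V) (A B : Set V) : Prop :=
  ∀ b ∈ B, ∀ p : List V, IsPath E p b root → ∃ a ∈ A, a ∈ p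

/-- `A` is a dominator of `B`: it dominates `B` and no proper subset `A \ {v}` does. -/
def IsDominator {V : Type*} (E : V → V → Prop) (root : V) (A B : Set V) : Prop :=
  Dominates E root A B ∧ ∀ v ∈ A, ¬ Dominates E root (A \ {v}) B

/-- `{v, w}` is a double-vertex dominator of `u`. -/
def DoubleDom {V : Type*} (E : V → V → Prop) (root : V) (u v w : V) : Prop :=
  v ≠ w ∧ Dominates E root {v, w} {u} ∧
    ¬ Dominates E root {v} {u} ∧ ¬ Dominates E root {w} {u}

/-- The edge relation `E` is acyclic. -/
def Acyclic {V : Type*} (E : V → V → Prop) : Prop :=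
  ∀ a b, E a b → ¬ Relation.ReflTransGen E b a

section Helpers

variable {V : Type*} {E : V → V → Prop}

lemma first_split {x : V} {l : List V} (h : x ∈ l) :
    ∃ s t, l = s ++ x :: t ∧ x ∉ s := by
  induction l with
  | nil => cases h
  | cons a l ih =>
    by_cases hax : x = a
    · exact ⟨[], l, by rw [hax]; rfl, by simp⟩
    · rcases List.mem_cons.1 h with h' | h'
      · exact absurd h' hax
      · obtain ⟨s, t, rfl, hns⟩ := ih h'
        exact ⟨a :: s, t, rfl, by simp [hax, hns]⟩

lemma last_split {x : V} {l : List V} (h : x ∈ l) :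
    ∃ s t, l = s ++ x :: t ∧ x ∉ t := by
  induction l with
  | nil => cases h
  | cons a l ih =>
    by_cases hxl : x ∈ l
    · obtain ⟨s, t, rfl, hnt⟩ := ih hxl
      exact ⟨a :: s, t, rfl, hnt⟩
    · have hax : x = a := by
        rcases List.mem_cons.1 h with h' | h'
        · exact h'
        · exact absurd h' hxl
      exact ⟨[], l, by rw [hax]; rfl, hxl⟩

lemma isPath_suffix {p l₁ l₂ : List V} {a b x : V}
    (h : IsPath E p a b) (hp : p = l₁ ++ x :: l₂) : IsPath E (x :: l₂) x b := by
  obtain ⟨hne, hh, hl, hc⟩ := h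
  subst hp
  refine ⟨List.cons_ne_nil _ _, rfl, ?_, (List.isChain_append.1 hc).2.1⟩
  rw [List.getLast?_append] at hl
  obtain ⟨y, hy⟩ := Option.isSome_iff_exists.1 (List.getLast?_isSome.2 (List.cons_ne_nil x l₂))
  rw [hy] at hl ⊢
  simpa using hl

lemma isPath_prefix {p l₁ l₂ : List V} {a b x : V}
    (h : IsPath E p a b) (hp : p = l₁ ++ x :: l₂) : IsPath E (l₁ ++ [x]) a x := by
  obtain ⟨hne, hh, hl, hc⟩ := h
  subst hp
  have hc' : List.Chain' E (l₁ ++ [x]) := by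
    have heq : l₁ ++ x :: l₂ = (l₁ ++ [x]) ++ l₂ := by simp
    rw [heq] at hc
    exact (List.isChain_append.1 hc).1
  refine ⟨by simp, ?_, ?_, hc'⟩
  · cases l₁ with
    | nil => simpa using hh
    | cons a' l => simpa using hh
  · simp [List.getLast?_append]

lemma path_trans {q l : List V} {a x b : V}
    (h₁ : IsPath E q a x) (h₂ : IsPath E (x :: l) x b) : IsPath E (q ++ l) a b := by
  obtain ⟨hne, hh, hl, hc⟩ := h₁
  obtain ⟨-, -, hl₂, hc₂⟩ := h₂
  refine ⟨by simp [hne], ?_, ?_, ?_⟩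
  · cases q with
    | nil => exact absurd rfl hne
    | cons a' t => simpa using hh
  · cases l with
    | nil =>
      have hxb : x = b := by simpa using hl₂
      simpa [hxb] using hl
    | cons y t =>
      rw [List.getLast?_append]
      have hgt : (y :: t).getLast? = some b := by
        simpa [List.getLast?_cons_cons] using hl₂
      rw [hgt]
      rfl
  · show List.IsChain E (q ++ l)
    rw [List.isChain_append]
    refine ⟨hc, (List.isChain_cons.1 hc₂).2, ?_⟩
    intro z hz y hy
    rw [hl] at hz
    simp only [Option.mem_some_iff] at hz
    subst hz
    exact (List.isChain_cons.1 hc₂).1 y hy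

end Helpers

theorem doubleDom_transfer {V : Type*} [Fintype V] (E : V → V → Prop) (root : V)
    (hacyc : Acyclic E) (u v₁ v₂ v₃ v₄ : V)
    (h12 : DoubleDom E root u v₁ v₂) (h23 : DoubleDom E root u v₂ v₃)
    (h14 : DoubleDom E root u v₁ v₄)
    (hdom : Dominates E root {v₁, v₂} {v₃}) :
    Dominates E root {v₁, v₄} {v₃} := by
  obtain ⟨h12ne, h12d, -, h12n2⟩ := h12
  obtain ⟨h23ne, h23d, -, -⟩ := h23
  obtain ⟨h14ne, h14d, -, h14n4⟩ := h14
  intro b hb q hq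
  rw [Set.mem_singleton_iff] at hb
  rw [hb] at hq
  clear hb
  by_contra hcon
  push_neg at hcon
  have hv1q : v₁ ∉ q := hcon v₁ (by simp)
  have hv4q : v₄ ∉ q := hcon v₄ (by simp)
  cases q with
  | nil => exact absurd rfl hq.1
  | cons c q' =>
  have hc3 : v₃ = c := (by simpa using hq.2.1 : c = v₃).symm
  subst hc3
  have h31 : v₁ ≠ v₃ := fun h => hv1q (by simp [h])
  have h43 : v₄ ≠ v₃ := fun h => hv4q (by simp [h])
  -- v₂ lies on the path p = v₃ :: q'
  have hv2p : v₂ ∈ v₃ :: q' := by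
    obtain ⟨a, ha, hap⟩ := hdom v₃ rfl (v₃ :: q') hq
    simp only [Set.mem_insert_iff, Set.mem_singleton_iff] at ha
    rcases ha with h | h <;> rw [h] at hap
    · exact absurd hap hv1q
    · exact hap
  obtain ⟨pc, pd, hpcd⟩ := List.append_of_mem hv2p
  have hP : IsPath E (v₂ :: pd) v₂ root := isPath_suffix hq hpcd
  have hpdsub : ∀ y, y ∈ pd → y ∈ v₃ :: q' := by
    intro y hy
    rw [hpcd]
    exact List.mem_append_right _ (List.mem_cons_of_mem _ hy)
  -- s : a path from u to root avoiding v₄ (exists since v₄ alone does not dominate u)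
  rw [Dominates] at h14n4
  push_neg at h14n4
  obtain ⟨b', hb', s, hs, hns⟩ := h14n4
  rw [Set.mem_singleton_iff] at hb'
  rw [hb'] at hs
  clear hb'
  have hv4s : v₄ ∉ s := hns v₄ rfl
  have hv1s : v₁ ∈ s := by
    obtain ⟨a, ha, has⟩ := h14d u rfl s hs
    simp only [Set.mem_insert_iff, Set.mem_singleton_iff] at ha
    rcases ha with h | h <;> rw [h] at has
    · exact has
    · exact absurd has hv4s
  -- r : a path from u to root avoiding v₂
  rw [Dominates] at h12n2
  push_neg at h12n2
  obtain ⟨b'', hb'', r, hr, hnr⟩ := h12n2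
  rw [Set.mem_singleton_iff] at hb''
  rw [hb''] at hr
  clear hb''
  have hv2r : v₂ ∉ r := hnr v₂ rfl
  have hv1r : v₁ ∈ r := by
    obtain ⟨a, ha, har⟩ := h12d u rfl r hr
    simp only [Set.mem_insert_iff, Set.mem_singleton_iff] at ha
    rcases ha with h | h <;> rw [h] at har
    · exact har
    · exact absurd har hv2r
  -- suffix of r after the last occurrence of v₁ avoids both v₂ and v₃
  obtain ⟨r₁, r₂, hr12, hv1r₂⟩ := last_split hv1r
  have hR : IsPath E (v₁ :: r₂) v₁ root := isPath_suffix hr hr12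
  have hr₂sub : ∀ y, y ∈ r₂ → y ∈ r := by
    intro y hy
    rw [hr12]
    exact List.mem_append_right _ (List.mem_cons_of_mem _ hy)
  have hv3r₂ : v₃ ∉ r₂ := by
    intro h3
    obtain ⟨e, f, hef⟩ := List.append_of_mem h3
    have hsplit : r = (r₁ ++ v₁ :: e) ++ v₃ :: f := by rw [hr12, hef]; simp
    have hS : IsPath E (v₃ :: f) v₃ root := isPath_suffix hr hsplit
    obtain ⟨a, ha, ham⟩ := hdom v₃ rfl _ hS
    simp only [Set.mem_insert_iff, Set.mem_singleton_iff] at ha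
    have hfsub : ∀ y, y ∈ f → y ∈ r₂ := by
      intro y hy
      rw [hef]
      exact List.mem_append_right _ (List.mem_cons_of_mem _ hy)
    rcases ha with h | h <;> rw [h] at ham
    · rcases List.mem_cons.1 ham with h' | h'
      · exact h31 h'
      · exact hv1r₂ (hfsub _ h')
    · rcases List.mem_cons.1 ham with h' | h'
      · exact h23ne h'
      · exact hv2r (hr₂sub _ (hfsub _ h'))
  -- prefix of s up to the first occurrence of v₁
  obtain ⟨s₁, s₂, hs12, hv1s₁⟩ := first_split hv1s
  have hs₁sub : ∀ y, y ∈ s₁ → y ∈ s := by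
    intro y hy
    rw [hs12]
    exact List.mem_append_left _ hy
  by_cases h2s : v₂ ∈ s₁
  · -- a path u → v₂ → root avoiding v₁ and v₄, contradicting that {v₁, v₄} dominates u
    obtain ⟨c, d, hcd2⟩ := List.append_of_mem h2s
    have hsplit : s = c ++ v₂ :: (d ++ v₁ :: s₂) := by rw [hs12, hcd2]; simp
    have hpre : IsPath E (c ++ [v₂]) u v₂ := isPath_prefix hs hsplit
    have hQ : IsPath E ((c ++ [v₂]) ++ pd) u root := path_trans hpre hP
    obtain ⟨a, ha, ham⟩ := h14d u rfl _ hQ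
    simp only [Set.mem_insert_iff, Set.mem_singleton_iff] at ha
    have hcsub : ∀ y, y ∈ c → y ∈ s₁ := by
      intro y hy; rw [hcd2]; exact List.mem_append_left _ hy
    rcases ha with h | h <;> rw [h] at ham
    · rcases List.mem_append.1 ham with h' | h'
      · rcases List.mem_append.1 h' with h'' | h''
        · exact hv1s₁ (hcsub _ h'')
        · exact h12ne (by simpa using h'')
      · exact hv1q (hpdsub _ h')
    · rcases List.mem_append.1 ham with h' | h'
      · rcases List.mem_append.1 h' with h'' | h''
        · exact hv4s (hs₁sub _ (hcsub _ h''))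
        · exact hv4s (by rw [(by simpa using h'' : v₄ = v₂)]; exact hs₁sub _ h2s)
      · exact hv4q (hpdsub _ h')
  by_cases h3s : v₃ ∈ s₁
  · -- a path u → v₃ → root avoiding v₁ and v₄, contradicting that {v₁, v₄} dominates u
    obtain ⟨c, d, hcd3⟩ := List.append_of_mem h3s
    have hsplit : s = c ++ v₃ :: (d ++ v₁ :: s₂) := by rw [hs12, hcd3]; simp
    have hpre : IsPath E (c ++ [v₃]) u v₃ := isPath_prefix hs hsplit
    have hQ : IsPath E ((c ++ [v₃]) ++ q') u root := path_trans hpre hq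
    obtain ⟨a, ha, ham⟩ := h14d u rfl _ hQ
    simp only [Set.mem_insert_iff, Set.mem_singleton_iff] at ha
    have hcsub : ∀ y, y ∈ c → y ∈ s₁ := by
      intro y hy; rw [hcd3]; exact List.mem_append_left _ hy
    rcases ha with h | h <;> rw [h] at ham
    · rcases List.mem_append.1 ham with h' | h'
      · rcases List.mem_append.1 h' with h'' | h''
        · exact hv1s₁ (hcsub _ h'')
        · exact h31 (by simpa using h'')
      · exact hv1q (List.mem_cons_of_mem _ h')
    · rcases List.mem_append.1 ham with h' | h'
      · rcases List.mem_append.1 h' with h'' | h''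
        · exact hv4s (hs₁sub _ (hcsub _ h''))
        · exact h43 (by simpa using h'')
      · exact hv4q (List.mem_cons_of_mem _ h')
  · -- the path u → v₁ → root (prefix of s followed by suffix of r) avoids v₂ and v₃,
    -- contradicting that {v₂, v₃} dominates u
    have hpre : IsPath E (s₁ ++ [v₁]) u v₁ := isPath_prefix hs hs12
    have hQ : IsPath E ((s₁ ++ [v₁]) ++ r₂) u root := path_trans hpre hR
    obtain ⟨a, ha, ham⟩ := h23d u rfl _ hQ
    simp only [Set.mem_insert_iff, Set.mem_singleton_iff] at ha
    rcases ha with h | h <;> rw [h] at ham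
    · rcases List.mem_append.1 ham with h' | h'
      · rcases List.mem_append.1 h' with h'' | h''
        · exact h2s h''
        · exact h12ne ((by simpa using h'' : v₂ = v₁)).symm
      · exact hv2r (hr₂sub _ h')
    · rcases List.mem_append.1 ham with h' | h'
      · rcases List.mem_append.1 h' with h'' | h''
        · exact h3s h''
        · exact h31 ((by simpa using h'' : v₃ = v₁)).symm
      · exact hv3r₂ h'
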